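/- For k ≥ 3 and all n, i with i ≤ n, the number of Hamiltonian cycles of the Turán graph satisfies h(T_k(n)) ≥ (n-1)_i · ((k-2)/k)^i · h(T_k(n-i)), where (n-1)_i is the falling factorial. -/

import Mathlib

open SimpleGraph Finset

/-- The cycle graph on `ZMod r`. -/
def cycGraph (r : ℕ) : SimpleGraph (ZMod r) := SimpleGraph.fromRel (fun a b => a = b + 1)

/-- The number of injective graph homomorphisms from `H` to `G`
(labelled copies of `H` as a subgraph of `G`). -/
noncomputable def copyCnt {α β : Type*} (H : SimpleGraph α) (G : SimpleGraph β) : ℕ :=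
  Nat.card {f : α → β // Function.Injective f ∧ ∀ a b, H.Adj a b → G.Adj (f a) (f b)}

/-- The number of cycles of length `r` in `G`, counted as subgraphs
(i.e. up to starting vertex and orientation). -/
noncomputable def cycCount {V : Type*} (r : ℕ) (G : SimpleGraph V) : ℕ := copyCnt (cycGraph r) G / (2 * r)

/-- The total number of cycles in `G`. -/
noncomputable def totCycCount {V : Type*} [Fintype V] (G : SimpleGraph V) : ℕ :=
  ∑ r ∈ Finset.Icc 3 (Fintype.card V), cycCount r G

/-- The number of Hamiltonian cycles in `G`. -/
noncomputable def hamCnt {V : Type*} [Fintype V] (G : SimpleGraph V) : ℕ := cycCount (Fintype.card V) G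

/-- `G` contains no subgraph isomorphic to `H`. -/
def Freeof {α β : Type*} (H : SimpleGraph α) (G : SimpleGraph β) : Prop :=
  ¬ ∃ f : α → β, Function.Injective f ∧ ∀ a b, H.Adj a b → G.Adj (f a) (f b)

def CP (k m : ℕ) (f : ZMod m → Fin m) : Prop :=
  Function.Injective f ∧ ∀ a b, (cycGraph m).Adj a b → (SimpleGraph.turanGraph m k).Adj (f a) (f b)
def GoodAt (k m : ℕ) (f : ZMod m → Fin m) (j : ZMod m) : Prop :=
  ((f j : ℕ)) % k ≠ m % k ∧ ((f (j+1) : ℕ)) % k ≠ m % k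
lemma one_ne_zero_zmod (m : ℕ) (hm : 2 ≤ m) : (1 : ZMod m) ≠ 0 := by
  haveI : Fact (1 < m) := ⟨by omega⟩
  intro h
  have := congrArg ZMod.val h
  rw [ZMod.val_one] at this
  simp at this
lemma CP_iff (k m : ℕ) (hm : 2 ≤ m) (f : ZMod m → Fin m) :
    CP k m f ↔ Function.Injective f ∧ ∀ j : ZMod m, ((f j : ℕ)) % k ≠ ((f (j+1) : ℕ)) % k := by
  constructor
  · rintro ⟨hinj, hhom⟩
    refine ⟨hinj, fun j => ?_⟩
    have hne : j ≠ j + 1 := fun h => one_ne_zero_zmod m hm (left_eq_add.mp h)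
    exact hhom j (j+1) ⟨hne, Or.inr rfl⟩
  · rintro ⟨hinj, hcons⟩
    refine ⟨hinj, fun a b hab => ?_⟩
    obtain ⟨hne, h1 | h2⟩ := hab
    · subst h1; exact (hcons b).symm
    · subst h2; exact hcons a

section L3
variable (k m : ℕ)

/-- insertion of new max vertex at position `p` -/
noncomputable def ins [NeZero m] (p : ZMod (m+1)) (f : ZMod m → Fin m) : ZMod (m+1) → Fin (m+1) :=
  fun x => if x = p then Fin.last m else (f (((x - p - 1).val : ℕ) : ZMod m)).castSucc

variable [NeZero m]

lemma sub_val_lt (p x : ZMod (m+1)) (hx : x ≠ p) : (x - p - 1).val < m := by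
  have h1 : x - p - 1 ≠ m := by
    intro h
    apply hx
    have hm1 : ((m : ℕ) : ZMod (m+1)) = -1 := by
      have h0 : ((m+1 : ℕ) : ZMod (m+1)) = 0 := ZMod.natCast_self _
      push_cast at h0
      linear_combination h0
    rw [hm1] at h
    linear_combination h
  have h2 : (x - p - 1).val < m + 1 := ZMod.val_lt _
  have h3 : (x - p - 1).val ≠ m := by
    intro h
    apply h1
    calc x - p - 1 = (((x - p - 1).val : ℕ) : ZMod (m+1)) := (ZMod.natCast_rightInverse _).symm
      _ = ((m : ℕ) : ZMod (m+1)) := by rw [h]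
  omega

lemma ins_inj (p : ZMod (m+1)) (f : ZMod m → Fin m) (hf : Function.Injective f) :
    Function.Injective (ins m p f) := by
  intro x y hxy
  unfold ins at hxy
  by_cases hx : x = p <;> by_cases hy : y = p
  · rw [hx, hy]
  · rw [if_pos hx, if_neg hy] at hxy
    exact absurd (congrArg Fin.val hxy) (by
      simp only [Fin.val_last, Fin.coe_castSucc]
      have := (f (((y - p - 1).val : ℕ) : ZMod m)).is_lt
      omega)
  · rw [if_neg hx, if_pos hy] at hxy
    exact absurd (congrArg Fin.val hxy) (by
      simp only [Fin.val_last, Fin.coe_castSucc]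
      have := (f (((x - p - 1).val : ℕ) : ZMod m)).is_lt
      omega)
  · rw [if_neg hx, if_neg hy] at hxy
    have h1 := hf (Fin.castSucc_injective m hxy)
    have h2 : (x - p - 1).val = (y - p - 1).val := by
      have e1 := ZMod.val_cast_of_lt (sub_val_lt m p x hx)
      have e2 := ZMod.val_cast_of_lt (sub_val_lt m p y hy)
      rw [← e1, ← e2, h1]
    have h3 : x - p - 1 = y - p - 1 := ZMod.val_injective _ h2
    linear_combination h3
end L3

section L3b
variable (k m : ℕ) [NeZero m]

set_option linter.unusedSectionVars false

lemma val_add_one (z : ZMod (m+1)) (hz : z.val < m) : (z + 1).val = z.val + 1 := by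
  haveI : Fact (1 < m + 1) := ⟨by omega⟩
  rw [ZMod.val_add, ZMod.val_one]
  exact Nat.mod_eq_of_lt (by omega)

lemma ins_hom (hk : 3 ≤ k) (hm : 3 ≤ m) (p : ZMod (m+1)) (f : ZMod m → Fin m)
    (hf : CP k m f) (hg : GoodAt k m f (-1)) :
    ∀ j : ZMod (m+1), ((ins m p f j : ℕ)) % k ≠ ((ins m p f (j+1) : ℕ)) % k := by
  have hcons := ((CP_iff k m (by omega) f).mp hf).2
  have h10 : (1 : ZMod (m+1)) ≠ 0 := one_ne_zero_zmod (m+1) (by omega)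
  have hgm : ((f (-1) : ℕ)) % k ≠ m % k := hg.1
  have hg0 : ((f 0 : ℕ)) % k ≠ m % k := by
    have := hg.2
    rwa [neg_add_cancel] at this
  intro j
  by_cases hj : j = p
  · -- ins j = last, ins (j+1) = castSucc (f 0)
    subst hj
    have hj1 : j + 1 ≠ j := fun h => h10 (left_eq_add.mp h.symm)
    rw [ins, if_pos rfl, ins, if_neg hj1]
    have e1 : j + 1 - j - 1 = 0 := by ring
    rw [e1]
    simp only [ZMod.val_zero, Nat.cast_zero, Fin.coe_castSucc, Fin.val_last]
    exact fun h => hg0 h.symm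
  · by_cases hj1 : j + 1 = p
    · -- ins j = castSucc (f (-1)), ins (j+1) = last
      rw [ins, if_neg hj, ins, if_pos hj1]
      have e1 : j - p - 1 = ((m - 1 : ℕ) : ZMod (m+1)) := by
        have h0 : ((m + 1 : ℕ) : ZMod (m+1)) = 0 := ZMod.natCast_self _
        have hc : ((m - 1 : ℕ) : ZMod (m+1)) = ((m : ℕ) : ZMod (m+1)) - 1 := by
          have : m - 1 + 1 = m := by omega
          rw [← this]; push_cast; ring
        rw [hc]
        push_cast at h0
        have hp : p = j + 1 := hj1.symm
        rw [hp]
        linear_combination -h0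
      rw [e1, ZMod.val_cast_of_lt (by omega : m - 1 < m + 1)]
      have e2 : ((m - 1 : ℕ) : ZMod m) = -1 := by
        have h0 : ((m : ℕ) : ZMod m) = 0 := ZMod.natCast_self _
        have : m - 1 + 1 = m := by omega
        rw [← this]; push_cast; rw [← this] at h0; push_cast at h0
        linear_combination h0
      rw [e2]
      simpa using hgm
    · -- both castSucc
      rw [ins, if_neg hj, ins, if_neg hj1]
      have hv : (j - p - 1).val < m := sub_val_lt m p j hj
      have e0 : j + 1 - p - 1 = (j - p - 1) + 1 := by ring
      have e1 : (j + 1 - p - 1).val = (j - p - 1).val + 1 := by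
        rw [e0]
        exact val_add_one m _ hv
      rw [e1]
      have e2 : ((((j - p - 1).val + 1 : ℕ)) : ZMod m) = (((j - p - 1).val : ℕ) : ZMod m) + 1 := by
        push_cast; ring
      rw [e2]
      simp only [Fin.coe_castSucc]
      exact hcons _
end L3b

section L3c
variable (k m : ℕ) [NeZero m]
set_option linter.unusedSectionVars false

lemma ins_CP (hk : 3 ≤ k) (hm : 3 ≤ m) (p : ZMod (m+1)) (f : ZMod m → Fin m)
    (hf : CP k m f) (hg : GoodAt k m f (-1)) : CP k (m+1) (ins m p f) := by
  rw [CP_iff k (m+1) (by omega)]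
  exact ⟨ins_inj m p f hf.1, ins_hom k m hk hm p f hf hg⟩

lemma ins_injective2 (hm : 3 ≤ m) (p q : ZMod (m+1)) (f g : ZMod m → Fin m)
    (h : ins m p f = ins m q g) : p = q ∧ f = g := by
  have hpq : p = q := by
    by_contra hne
    have h1 : ins m p f p = Fin.last m := by rw [ins, if_pos rfl]
    have h2 : ins m q g p = (g (((p - q - 1).val : ℕ) : ZMod m)).castSucc := by
      rw [ins, if_neg hne]
    rw [h] at h1
    rw [h2] at h1
    have := congrArg Fin.val h1
    simp only [Fin.coe_castSucc, Fin.val_last] at this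
    have := (g (((p - q - 1).val : ℕ) : ZMod m)).is_lt
    omega
  subst hpq
  refine ⟨rfl, funext fun a => ?_⟩
  set x : ZMod (m+1) := p + 1 + ((a.val : ℕ) : ZMod (m+1)) with hx
  have hxp : x ≠ p := by
    intro hh
    have e : ((a.val + 1 : ℕ) : ZMod (m+1)) = 0 := by
      have := congrArg (· - p) hh
      simp only [hx] at this
      push_cast
      linear_combination this
    have := congrArg ZMod.val e
    rw [ZMod.val_cast_of_lt (by have := ZMod.val_lt a; omega : a.val + 1 < m + 1)] at this
    simp at this
  have ex : x - p - 1 = ((a.val : ℕ) : ZMod (m+1)) := by rw [hx]; ring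
  have ev : (x - p - 1).val = a.val := by
    rw [ex, ZMod.val_cast_of_lt (by have := ZMod.val_lt a; omega : a.val < m + 1)]
  have key := congrFun h x
  rw [ins, if_neg hxp, ins, if_neg hxp, ev] at key
  have : f ((a.val : ℕ) : ZMod m) = g ((a.val : ℕ) : ZMod m) := Fin.castSucc_injective m key
  rwa [ZMod.natCast_rightInverse a] at this

lemma L3 (hk : 3 ≤ k) (hm : 3 ≤ m) :
    (m + 1) * Nat.card {f : ZMod m → Fin m // CP k m f ∧ GoodAt k m f (-1)} ≤
      Nat.card {g : ZMod (m+1) → Fin (m+1) // CP k (m+1) g} := by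
  have key : Nat.card (ZMod (m+1) × {f : ZMod m → Fin m // CP k m f ∧ GoodAt k m f (-1)}) ≤
      Nat.card {g : ZMod (m+1) → Fin (m+1) // CP k (m+1) g} := by
    refine Nat.card_le_card_of_injective
      (fun pf => ⟨ins m pf.1 pf.2.1, ins_CP k m hk hm pf.1 pf.2.1 pf.2.2.1 pf.2.2.2⟩) ?_
    rintro ⟨p, f, hf⟩ ⟨q, g, hg⟩ hh
    simp only [Subtype.mk.injEq] at hh
    obtain ⟨h1, h2⟩ := ins_injective2 m hm p q f g hh
    subst h1
    subst h2
    rfl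
  rwa [Nat.card_prod, Nat.card_zmod] at key
end L3c

section L2
variable (k m : ℕ)
set_option linter.unusedSectionVars false

lemma classC_card (hk : 1 ≤ k) :
    ((univ : Finset (Fin m)).filter (fun v : Fin m => (v : ℕ) % k = m % k)).card = m / k := by
  have h1 : ((univ : Finset (Fin m)).filter (fun v : Fin m => (v : ℕ) % k = m % k)).card
      = ((range m).filter (fun x => x % k = m % k)).card := by
    apply Finset.card_bij (fun (v : Fin m) _ => (v : ℕ))
    · intro a ha
      simp only [mem_filter, mem_univ, true_and] at ha
      simp only [mem_filter, mem_range]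
      exact ⟨a.is_lt, ha⟩
    · intro a _ b _ h
      exact Fin.ext h
    · intro b hb
      simp only [mem_filter, mem_range] at hb
      exact ⟨⟨b, hb.1⟩, by simp [hb.2], rfl⟩
  rw [h1]
  have h2 : (range m).filter (fun x => x % k = m % k) = (range (m / k)).image (fun t => m % k + k * t) := by
    ext x
    simp only [mem_filter, mem_range, mem_image]
    constructor
    · rintro ⟨hx, hxm⟩
      refine ⟨x / k, ?_, ?_⟩
      · by_contra hc
        push_neg at hc
        have e1 : k * (m / k) + m % k = m := Nat.div_add_mod m k
        have e2 : k * (x / k) + x % k = x := Nat.div_add_mod x k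
        have := Nat.mul_le_mul_left k hc
        omega
      · have e2 : k * (x / k) + x % k = x := Nat.div_add_mod x k
        omega
    · rintro ⟨t, ht, rfl⟩
      constructor
      · have h3 : k * (t + 1) ≤ k * (m / k) := Nat.mul_le_mul_left k ht
        have h4 : m / k * k ≤ m := Nat.div_mul_le_self m k
        have h5 : m % k < k := Nat.mod_lt m (by omega)
        nlinarith [h3, h4, h5]
      · rw [Nat.add_mul_mod_self_left]
        exact Nat.mod_mod_of_dvd m dvd_rfl
  rw [h2, Finset.card_image_of_injective _ (fun a b hab => Nat.eq_of_mul_eq_mul_left (by omega : 0 < k) (Nat.add_left_cancel hab)), Finset.card_range]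

variable [NeZero m]

instance : ∀ (f : ZMod m → Fin m) (j : ZMod m), Decidable (GoodAt k m f j) := fun f j => by
  unfold GoodAt; infer_instance

lemma goodAt_card (hk : 3 ≤ k) (hm : 3 ≤ m) (f : ZMod m → Fin m) (hf : Function.Injective f) :
    m - 2 * (m / k) ≤ ((univ : Finset (ZMod m)).filter (GoodAt k m f)).card := by
  classical
  set Bad1 := (univ : Finset (ZMod m)).filter (fun j => (f j : ℕ) % k = m % k) with hB1
  set Bad2 := (univ : Finset (ZMod m)).filter (fun j => (f (j+1) : ℕ) % k = m % k) with hB2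
  have hgood : (univ : Finset (ZMod m)).filter (GoodAt k m f) = univ \ (Bad1 ∪ Bad2) := by
    ext j
    simp only [mem_filter, mem_univ, true_and, mem_sdiff, mem_union, hB1, hB2, GoodAt]
    tauto
  have hc1 : Bad1.card ≤ m / k := by
    rw [← classC_card k m (by omega)]
    apply Finset.card_le_card_of_injOn (fun j => f j)
    · intro j hj
      simp only [hB1, mem_coe, mem_filter, mem_univ, true_and] at hj ⊢
      exact hj
    · intro a _ b _ h
      exact hf h
  have hc2 : Bad2.card ≤ m / k := by
    rw [← classC_card k m (by omega)]
    apply Finset.card_le_card_of_injOn (fun j => f (j+1))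
    · intro j hj
      simp only [hB2, mem_coe, mem_filter, mem_univ, true_and] at hj ⊢
      exact hj
    · intro a _ b _ h
      have := hf h
      exact add_right_cancel this
  rw [hgood, Finset.card_sdiff_of_subset (Finset.subset_univ _)]
  have hu : (univ : Finset (ZMod m)).card = m := by rw [Finset.card_univ, ZMod.card]
  have hun := Finset.card_union_le Bad1 Bad2
  omega

end L2

section L2b
variable (k m : ℕ) [NeZero m]
set_option linter.unusedSectionVars false
attribute [local instance 10] Classical.propDecidable

lemma CP_rot (hm : 3 ≤ m) (c : ZMod m) (f : ZMod m → Fin m) (hf : CP k m f) :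
    CP k m (fun x => f (x + c)) := by
  rw [CP_iff k m (by omega)] at hf ⊢
  obtain ⟨hinj, hcons⟩ := hf
  constructor
  · intro a b hab
    have := hinj hab
    exact add_right_cancel this
  · intro j
    have := hcons (j + c)
    have e : j + 1 + c = j + c + 1 := by ring
    rw [e]
    exact this

lemma rot_card (hm : 3 ≤ m) (j : ZMod m) :
    ((univ : Finset (ZMod m → Fin m)).filter (fun f => CP k m f ∧ GoodAt k m f j)).card =
    ((univ : Finset (ZMod m → Fin m)).filter (fun f => CP k m f ∧ GoodAt k m f (-1))).card := by
  classical
  apply Finset.card_bij' (fun f _ => fun x => f (x + (j + 1)))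
    (fun g _ => fun x => g (x - (j + 1)))
  · intro f hf
    simp only [mem_filter, mem_univ, true_and] at hf ⊢
    refine ⟨CP_rot k m hm (j+1) f hf.1, ?_, ?_⟩
    · show ((f (-1 + (j + 1)) : ℕ)) % k ≠ m % k
      have e : -1 + (j + 1) = j := by ring
      rw [e]
      exact hf.2.1
    · show ((f (-1 + 1 + (j + 1)) : ℕ)) % k ≠ m % k
      have e : -1 + 1 + (j + 1) = j + 1 := by ring
      rw [e]
      exact hf.2.2
  · intro g hg
    simp only [mem_filter, mem_univ, true_and] at hg ⊢
    have hcp : CP k m (fun x => g (x - (j+1))) := by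
      have := CP_rot k m hm (-(j+1)) g hg.1
      simpa [sub_eq_add_neg] using this
    refine ⟨hcp, ?_, ?_⟩
    · show ((g (j - (j + 1)) : ℕ)) % k ≠ m % k
      have e : j - (j + 1) = -1 := by ring
      rw [e]
      exact hg.2.1
    · show ((g (j + 1 - (j + 1)) : ℕ)) % k ≠ m % k
      have e : j + 1 - (j + 1) = -1 + 1 := by ring
      rw [e]
      exact hg.2.2
  · intro f _
    funext x
    have e : x - (j + 1) + (j + 1) = x := by ring
    show f (x - (j + 1) + (j + 1)) = f x
    rw [e]
  · intro g _
    funext x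
    have e : x + (j + 1) - (j + 1) = x := by ring
    show g (x + (j + 1) - (j + 1)) = g x
    rw [e]

lemma L2 (hk : 3 ≤ k) (hm : 3 ≤ m) :
    (m - 2 * (m / k)) * Nat.card {f : ZMod m → Fin m // CP k m f} ≤
      m * Nat.card {f : ZMod m → Fin m // CP k m f ∧ GoodAt k m f (-1)} := by
  classical
  rw [Nat.card_eq_fintype_card, Fintype.card_subtype,
      Nat.card_eq_fintype_card, Fintype.card_subtype]
  have key : (m : ℕ) * ((univ : Finset (ZMod m → Fin m)).filter
        (fun f => CP k m f ∧ GoodAt k m f (-1))).card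
      = ∑ j : ZMod m, ((univ : Finset (ZMod m → Fin m)).filter
        (fun f => CP k m f ∧ GoodAt k m f j)).card := by
    rw [Finset.sum_congr rfl (fun j _ => rot_card k m hm j), Finset.sum_const,
        Finset.card_univ, ZMod.card, smul_eq_mul]
  rw [key]
  have swap : ∑ j : ZMod m, ((univ : Finset (ZMod m → Fin m)).filter
        (fun f => CP k m f ∧ GoodAt k m f j)).card
      = ∑ f : ZMod m → Fin m, ∑ j : ZMod m,
          (if CP k m f ∧ GoodAt k m f j then 1 else 0) := by
    rw [Finset.sum_comm]
    exact Finset.sum_congr rfl (fun j _ => Finset.card_filter _ _)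
  rw [swap]
  have inner : ∀ f : ZMod m → Fin m,
      (if CP k m f then m - 2 * (m / k) else 0) ≤
        ∑ j : ZMod m, (if CP k m f ∧ GoodAt k m f j then 1 else 0) := by
    intro f
    by_cases hcp : CP k m f
    · simp only [hcp, if_true, true_and]
      have : ∑ j : ZMod m, (if GoodAt k m f j then 1 else 0)
          = ((univ : Finset (ZMod m)).filter (GoodAt k m f)).card := by
        rw [Finset.card_filter]
      rw [this]
      exact goodAt_card k m hk hm f hcp.1
    · simp [hcp]
  calc (m - 2 * (m / k)) * ((univ : Finset (ZMod m → Fin m)).filter (fun f => CP k m f)).card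
      = ∑ f : ZMod m → Fin m, (if CP k m f then m - 2 * (m / k) else 0) := by
        rw [← Finset.sum_filter, Finset.sum_const, smul_eq_mul, mul_comm]
    _ ≤ _ := Finset.sum_le_sum (fun f _ => inner f)
end L2b

section L1
variable (k r : ℕ) [NeZero r]
set_option linter.unusedSectionVars false

lemma CP_refl (hm : 3 ≤ r) (a : ZMod r) (f : ZMod r → Fin r) (hf : CP k r f) :
    CP k r (fun x => f (a - x)) := by
  rw [CP_iff k r (by omega)] at hf ⊢
  obtain ⟨hinj, hcons⟩ := hf
  constructor
  · intro x y hxy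
    have := hinj hxy
    have e := congrArg (fun z => a - z) this
    simpa using e
  · intro j
    have := hcons (a - (j + 1))
    have e1 : a - (j + 1) + 1 = a - j := by ring
    rw [e1] at this
    exact fun hh => this hh.symm

lemma CP_rot' (hm : 3 ≤ r) (a : ZMod r) (f : ZMod r → Fin r) (hf : CP k r f) :
    CP k r (fun x => f (a + x)) := by
  have := CP_rot k r hm a f hf
  simpa [add_comm] using this

/-- canonical representatives -/
def X0 (k r : ℕ) [NeZero r] : Type :=
  {f : ZMod r → Fin r // CP k r f ∧ (f 0 : ℕ) = 0 ∧ (f 1 : ℕ) < (f (-1) : ℕ)}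

noncomputable def Phi (hm : 3 ≤ r) : (ZMod r × Bool) × X0 k r → {f : ZMod r → Fin r // CP k r f} :=
  fun q => if hb : q.1.2 then ⟨fun x => q.2.1 (q.1.1 + x), CP_rot' k r hm q.1.1 q.2.1 q.2.2.1⟩
    else ⟨fun x => q.2.1 (q.1.1 - x), CP_refl k r hm q.1.1 q.2.1 q.2.2.1⟩

lemma Phi_bij (hk : 3 ≤ k) (hm : 3 ≤ r) : Function.Bijective (Phi k r hm) := by
  constructor
  · rintro ⟨⟨a, b⟩, f, hf, hf0, hflt⟩ ⟨⟨a', b'⟩, g, hg, hg0, hglt⟩ hh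
    have hfg0 : f 0 = g 0 := by
      apply Fin.ext
      rw [hf0, hg0]
    cases b <;> cases b' <;>
      simp only [Phi, dif_pos, dif_neg, Bool.false_eq_true, not_false_iff, if_true,
        Subtype.mk.injEq] at hh
    -- case false false
    · have E : ∀ x, f (a - x) = g (a' - x) := fun x => congrFun hh x
      have e0 : f 0 = g (a' - a) := by have := E a; simpa using this
      have haa : a' = a := by
        have : g (a' - a) = g 0 := by rw [← e0, hfg0]
        have h2 := hg.1 this
        linear_combination h2
      subst haa
      have hfg : f = g := by
        funext y
        have := E (a' - y)
        simpa using this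
      subst hfg
      rfl
    -- case false true
    · have E : ∀ x, f (a - x) = g (a' + x) := fun x => congrFun hh x
      have e0 : f 0 = g (a' + a) := by have := E a; simpa using this
      have haa : a' = -a := by
        have : g (a' + a) = g 0 := by rw [← e0, hfg0]
        have h2 := hg.1 this
        linear_combination h2
      subst haa
      have hfg : ∀ y, f y = g (-y) := by
        intro y
        have := E (a - y)
        have e : -a + (a - y) = -y := by ring
        rw [e] at this
        simpa using this
      have c1 := hfg 1
      have c2 := hfg (-1)
      rw [neg_neg] at c2
      rw [c1] at hflt
      rw [c2] at hflt
      omega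
    -- case true false
    · have E : ∀ x, f (a + x) = g (a' - x) := fun x => congrFun hh x
      have e0 : f 0 = g (a' + a) := by have := E (-a); simpa [sub_neg_eq_add] using this
      have haa : a' = -a := by
        have : g (a' + a) = g 0 := by rw [← e0, hfg0]
        have h2 := hg.1 this
        linear_combination h2
      subst haa
      have hfg : ∀ y, f y = g (-y) := by
        intro y
        have := E (y - a)
        have e1 : a + (y - a) = y := by ring
        have e2 : -a - (y - a) = -y := by ring
        rw [e1, e2] at this
        exact this
      have c1 := hfg 1
      have c2 := hfg (-1)
      rw [neg_neg] at c2
      rw [c1] at hflt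
      rw [c2] at hflt
      omega
    -- case true true
    · have E : ∀ x, f (a + x) = g (a' + x) := fun x => congrFun hh x
      have e0 : f 0 = g (a' - a) := by
        have := E (-a)
        have e : a + -a = 0 := by ring
        have e' : a' + -a = a' - a := by ring
        rw [e, e'] at this
        exact this
      have haa : a' = a := by
        have : g (a' - a) = g 0 := by rw [← e0, hfg0]
        have h2 := hg.1 this
        linear_combination h2
      subst haa
      have hfg : f = g := by
        funext y
        have := E (y - a')
        have e : a' + (y - a') = y := by ring
        rw [e] at this
        exact this
      subst hfg
      rfl
  · rintro ⟨f, hf⟩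
    have hrpos : 0 < r := Nat.pos_of_ne_zero (NeZero.ne r)
    have hbij : Function.Bijective f := (Fintype.bijective_iff_injective_and_card f).mpr
      ⟨hf.1, by simp [ZMod.card]⟩
    obtain ⟨c, hc⟩ := hbij.2 ⟨0, hrpos⟩
    have hne : f (c + 1) ≠ f (c - 1) := by
      intro hh
      have := hf.1 hh
      have e : (c : ZMod r) + 1 - (c - 1) = ((2 : ℕ) : ZMod r) := by push_cast; ring
      have h2 : ((2 : ℕ) : ZMod r) ≠ 0 := by
        intro h0
        have := congrArg ZMod.val h0
        rw [ZMod.val_cast_of_lt (by omega : 2 < r)] at this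
        simp at this
      apply h2
      rw [← e]
      linear_combination this
    by_cases hlt : (f (c + 1) : ℕ) < (f (c - 1) : ℕ)
    · refine ⟨⟨⟨-c, true⟩, ⟨fun y => f (y + c), CP_rot k r hm c f hf, ?_, ?_⟩⟩, ?_⟩
      · show ((f (0 + c) : ℕ)) = 0
        rw [zero_add, hc]
      · show ((f (1 + c) : ℕ)) < ((f (-1 + c) : ℕ))
        have e1 : (1 : ZMod r) + c = c + 1 := by ring
        have e2 : (-1 : ZMod r) + c = c - 1 := by ring
        rw [e1, e2]
        exact hlt
      · simp only [Phi, dif_pos, if_true]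
        apply Subtype.ext
        funext x
        show f (-c + x + c) = f x
        have e : -c + x + c = x := by ring
        rw [e]
    · refine ⟨⟨⟨c, false⟩, ⟨fun y => f (c - y), CP_refl k r hm c f hf, ?_, ?_⟩⟩, ?_⟩
      · show ((f (c - 0) : ℕ)) = 0
        rw [sub_zero, hc]
      · show ((f (c - 1) : ℕ)) < ((f (c - -1) : ℕ))
        have e : c - (-1 : ZMod r) = c + 1 := by ring
        rw [e]
        have : (f (c - 1) : ℕ) ≠ (f (c + 1) : ℕ) := fun hh => hne (Fin.ext hh.symm)
        omega
      · simp only [Phi, Bool.false_eq_true, dif_neg, not_false_iff]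
        apply Subtype.ext
        funext x
        show f (c - (c - x)) = f x
        have e : c - (c - x) = x := by ring
        rw [e]

lemma L1 (hk : 3 ≤ k) (hm : 3 ≤ r) : 2 * r ∣ Nat.card {f : ZMod r → Fin r // CP k r f} := by
  have hcc := Nat.card_eq_of_bijective _ (Phi_bij k r hk hm)
  rw [Nat.card_prod, Nat.card_prod, Nat.card_zmod] at hcc
  have hb : Nat.card Bool = 2 := by simp [Nat.card_eq_fintype_card]
  rw [hb] at hcc
  exact ⟨Nat.card (X0 k r), by rw [← hcc]; ring⟩
end L1

lemma copyCnt_eq (k m : ℕ) :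
    copyCnt (cycGraph m) (SimpleGraph.turanGraph m k) = Nat.card {f // CP k m f} := rfl

lemma hamCnt_eq (k n : ℕ) :
    hamCnt (SimpleGraph.turanGraph n k) = Nat.card {f // CP k n f} / (2 * n) := by
  have h : Fintype.card (Fin n) = n := Fintype.card_fin n
  rw [hamCnt, cycCount, h, copyCnt_eq]

lemma hamCnt_one (k : ℕ) : hamCnt (SimpleGraph.turanGraph 1 k) = 0 := by
  rw [hamCnt_eq]
  have : Nat.card {f // CP k 1 f} ≤ Nat.card (ZMod 1 → Fin 1) :=
    Nat.card_le_card_of_injective Subtype.val Subtype.val_injective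
  simp at this
  omega

lemma hamCnt_two (k : ℕ) : hamCnt (SimpleGraph.turanGraph 2 k) = 0 := by
  rw [hamCnt_eq]
  have h : Nat.card {f // CP k 2 f} ≤ Nat.card (Fin 2) := by
    refine Nat.card_le_card_of_injective (fun f => f.1 0) fun a b hab => ?_
    obtain ⟨f, hf, hf2⟩ := a
    obtain ⟨g, hg, hg2⟩ := b
    apply Subtype.ext
    show f = g
    have h : f 0 = g 0 := hab
    have key : ∀ x : ZMod 2, x = 0 ∨ x = 1 := by decide
    funext x
    rcases key x with rfl | rfl
    · exact h
    · have h1 : f 1 ≠ f 0 := fun hc => absurd (hf hc) (by decide)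
      have h2 : g 1 ≠ g 0 := fun hc => absurd (hg hc) (by decide)
      apply Fin.ext
      have a1 := (f 1).is_lt
      have a2 := (g 1).is_lt
      have a3 := (f 0).is_lt
      have b1 : (f 1).val ≠ (f 0).val := fun hc => h1 (Fin.ext hc)
      have b2 : (g 1).val ≠ (g 0).val := fun hc => h2 (Fin.ext hc)
      have b3 : (f 0).val = (g 0).val := congrArg Fin.val h
      omega
  simp at h
  omega

lemma step_main (k m : ℕ) (hk : 3 ≤ k) (hm : 3 ≤ m) :
    (m : ℝ) * (((k : ℝ) - 2) / k) * (hamCnt (SimpleGraph.turanGraph m k) : ℝ) ≤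
      (hamCnt (SimpleGraph.turanGraph (m + 1) k) : ℝ) := by
  haveI : NeZero m := ⟨by omega⟩
  set t := m / k with ht
  have hkt : k * t ≤ m := by rw [ht, mul_comm]; exact Nat.div_mul_le_self m k
  have h2t : 2 * t ≤ m := by
    have h3 : 3 * t ≤ k * t := Nat.mul_le_mul_right t hk
    omega
  have hL2' := L2 k m hk hm
  have hL3' := L3 k m hk hm
  have hL1' := L1 k (m+1) hk (by omega)
  rw [hamCnt_eq k m, hamCnt_eq k (m+1)]
  set A := Nat.card {f : ZMod m → Fin m // CP k m f} with hA
  set B := Nat.card {f : ZMod m → Fin m // CP k m f ∧ GoodAt k m f (-1)} with hB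
  set A' := Nat.card {g : ZMod (m+1) → Fin (m+1) // CP k (m+1) g} with hA'
  have hm0 : (0:ℝ) < m := by
    have : (3:ℝ) ≤ m := by exact_mod_cast hm
    linarith
  have hk0 : (0:ℝ) < k := by
    have : (3:ℝ) ≤ k := by exact_mod_cast hk
    linarith
  have hq0 : (0:ℝ) ≤ ((k:ℝ) - 2) / k := by
    apply div_nonneg _ (le_of_lt hk0)
    have : (3:ℝ) ≤ k := by exact_mod_cast hk
    linarith
  have e1 : ((A / (2*m) : ℕ) : ℝ) ≤ (A:ℝ) / (2*m) := by
    have := Nat.cast_div_le (α := ℝ) (m := A) (n := 2*m)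
    push_cast at this
    exact this
  have e2 : ((A' / (2*(m+1)) : ℕ) : ℝ) = (A':ℝ) / (2*(m+1)) := by
    rw [Nat.cast_div hL1' (by positivity)]
    push_cast
    ring
  have key : ((k:ℝ) - 2) * A ≤ (k:ℝ) * B := by
    have c2 : ((m - 2*t : ℕ) : ℝ) * A ≤ (m:ℝ) * B := by exact_mod_cast hL2'
    have c3 : ((m - 2*t : ℕ) : ℝ) = (m:ℝ) - 2*t := by
      rw [Nat.cast_sub h2t]; push_cast; ring
    rw [c3] at c2
    have c4 : (k:ℝ) * t ≤ m := by exact_mod_cast hkt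
    have hA0 : (0:ℝ) ≤ A := Nat.cast_nonneg _
    have step1 : ((k:ℝ) - 2) * (m:ℝ) * A ≤ (k:ℝ) * ((m:ℝ) - 2*t) * A := by
      apply mul_le_mul_of_nonneg_right _ hA0
      nlinarith [c4]
    have step2 : (k:ℝ) * (((m:ℝ) - 2*t) * A) ≤ (k:ℝ) * ((m:ℝ) * B) :=
      mul_le_mul_of_nonneg_left c2 (le_of_lt hk0)
    have : ((k:ℝ) - 2) * A * m ≤ (k:ℝ) * B * m := by nlinarith [step1, step2]
    exact le_of_mul_le_mul_right this hm0
  have hc3 : ((m:ℝ) + 1) * B ≤ (A' : ℝ) := by exact_mod_cast hL3'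
  calc (m : ℝ) * (((k : ℝ) - 2) / k) * ((A / (2*m) : ℕ) : ℝ)
      ≤ (m : ℝ) * (((k : ℝ) - 2) / k) * ((A:ℝ) / (2*m)) := by
        apply mul_le_mul_of_nonneg_left e1
        positivity
    _ = ((k:ℝ) - 2) * A / (2*k) := by field_simp
    _ ≤ (B:ℝ) / 2 := by
        rw [div_le_div_iff₀ (by positivity) (by norm_num)]
        nlinarith [key]
    _ ≤ (A':ℝ) / (2*(m+1)) := by
        rw [div_le_div_iff₀ (by norm_num) (by positivity)]
        nlinarith [hc3]
    _ = ((A' / (2*(m+1)) : ℕ) : ℝ) := e2.symm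


lemma step (k : ℕ) (hk : 3 ≤ k) (m : ℕ) :
    (m : ℝ) * (((k : ℝ) - 2) / k) * (hamCnt (SimpleGraph.turanGraph m k) : ℝ) ≤
      (hamCnt (SimpleGraph.turanGraph (m + 1) k) : ℝ) := by
  match m, Nat.lt_or_ge m 3 with
  | 0, _ => simp
  | 1, _ =>
    rw [hamCnt_one]
    simp
  | 2, _ =>
    rw [hamCnt_two]
    simp
  | (m + 3), _ => exact step_main k (m + 3) hk (by omega)


/-- For `k ≥ 3` and `i ≤ n`, `h(T_k(n)) ≥ (n-1)_i ((k-2)/k)^i h(T_k(n-i))`. -/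
theorem stmt3 (k n i : ℕ) (hk : 3 ≤ k) (hi : i ≤ n) :
    ((n - 1).descFactorial i : ℝ) * (((k : ℝ) - 2) / k) ^ i *
        (hamCnt (SimpleGraph.turanGraph (n - i) k) : ℝ) ≤
      (hamCnt (SimpleGraph.turanGraph n k) : ℝ) := by

  have hq : (0:ℝ) ≤ ((k : ℝ) - 2) / k := by
    apply div_nonneg <;> [skip; positivity]
    have : (3:ℝ) ≤ k := by exact_mod_cast hk
    linarith
  induction i with
  | zero => simp
  | succ i ih =>
    have hi' : i ≤ n := by omega
    have ihh := ih hi'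
    have hstep := step k hk (n - i - 1)
    have hni : n - i - 1 + 1 = n - i := by omega
    rw [hni] at hstep
    have hdesc : ((n - 1).descFactorial (i+1) : ℝ) = (n - 1 - i : ℕ) * ((n - 1).descFactorial i : ℝ) := by
      rw [Nat.descFactorial_succ]; push_cast; ring
    have hnn : ((n - 1 - i : ℕ) : ℝ) = ((n - i - 1 : ℕ) : ℝ) := by norm_num; omega
    rw [hdesc, hnn]
    calc ((n - i - 1 : ℕ) : ℝ) * ((n - 1).descFactorial i : ℝ) * (((k:ℝ) - 2) / k) ^ (i+1) *
          (hamCnt (SimpleGraph.turanGraph (n - (i+1)) k) : ℝ)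
        = ((n - 1).descFactorial i : ℝ) * (((k:ℝ) - 2) / k) ^ i *
            (((n - i - 1 : ℕ) : ℝ) * (((k:ℝ) - 2) / k) *
              (hamCnt (SimpleGraph.turanGraph (n - i - 1) k) : ℝ)) := by
          rw [show n - (i+1) = n - i - 1 by omega]; ring
      _ ≤ ((n - 1).descFactorial i : ℝ) * (((k:ℝ) - 2) / k) ^ i *
            (hamCnt (SimpleGraph.turanGraph (n - i) k) : ℝ) := by
          apply mul_le_mul_of_nonneg_left hstep
          positivity
      _ ≤ _ := ihh
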